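/- For a convex body K in a normed space X and any exterior point x ∉ K, the Chebyshev-type extremal value C_n(K,x) := sup{ p(x) : p ∈ 𝒫_n, ‖p‖_K ≤ 1 } equals T_n(α(K,x)), where T_n is the n-th Chebyshev polynomial and α(K,x) is the generalized Minkowski functional; moreover the supremum is attained by a composition of T_n with an affine functional normalized by the width of K in a suitable direction. -/

import Mathlib

open scoped BigOperators

namespace RS
open Polynomial Real Set

lemma chebT_natDegree_le (n : ℕ) : (Polynomial.Chebyshev.T ℝ n).natDegree ≤ n := by
  induction n using Nat.strong_induction_on with
  | _ n ih =>
    match n with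
    | 0 => simp [Polynomial.Chebyshev.T_zero]
    | 1 => simpa [Polynomial.Chebyshev.T_one] using natDegree_X_le
    | (m+2) =>
      have e2 : ((m+2:ℕ):ℤ) = (m:ℤ)+2 := by push_cast; ring
      have e1 : ((m+1:ℕ):ℤ) = (m:ℤ)+1 := by push_cast; ring
      have h1 := ih (m+1) (by omega)
      have h0 := ih m (by omega)
      rw [e1] at h1
      rw [e2, Polynomial.Chebyshev.T_add_two]
      refine le_trans (natDegree_sub_le _ _) (max_le ?_ (by omega))
      refine le_trans (natDegree_mul_le) ?_
      have hx : (2 * X : ℝ[X]).natDegree ≤ 1 :=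
        le_trans (natDegree_mul_le) (by simp)
      omega

lemma chebT_eval_one (n : ℕ) : (Polynomial.Chebyshev.T ℝ n).eval 1 = 1 := by
  have := Polynomial.Chebyshev.T_real_cos (θ := 0) (n := n)
  simpa using this

lemma chebT_abs_le (n : ℕ) {t : ℝ} (h1 : -1 ≤ t) (h2 : t ≤ 1) :
    |(Polynomial.Chebyshev.T ℝ n).eval t| ≤ 1 := by
  have : t = Real.cos (Real.arccos t) := (Real.cos_arccos h1 h2).symm
  rw [this, Polynomial.Chebyshev.T_real_cos]
  exact Real.abs_cos_le_one _

lemma chebT_one_le_aux (s : ℝ) (hs : 1 ≤ s) (n : ℕ) :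
    1 ≤ (Polynomial.Chebyshev.T ℝ n).eval s ∧
      (Polynomial.Chebyshev.T ℝ n).eval s ≤ (Polynomial.Chebyshev.T ℝ (n+1 : ℕ)).eval s := by
  induction n with
  | zero =>
    constructor
    · simp [Polynomial.Chebyshev.T_zero]
    · have : ((0:ℕ)+1 : ℤ) = 1 := by norm_num
      simp [Polynomial.Chebyshev.T_zero, this, Polynomial.Chebyshev.T_one, hs]
  | succ m ih =>
    have e2 : ((m+1+1:ℕ):ℤ) = (m:ℤ)+2 := by push_cast; ring
    have e1 : ((m+1:ℕ):ℤ) = (m:ℤ)+1 := by push_cast; ring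
    have h1 := ih.1
    have h2 := ih.2
    rw [e1] at h2 ⊢
    constructor
    · linarith
    · rw [e2, Polynomial.Chebyshev.T_add_two]
      simp only [eval_sub, eval_mul, eval_ofNat, eval_X]
      nlinarith

lemma chebT_one_le (n : ℕ) {s : ℝ} (hs : 1 ≤ s) : 1 ≤ (Polynomial.Chebyshev.T ℝ n).eval s :=
  (chebT_one_le_aux s hs n).1

end RS

namespace RS2
open Polynomial Real Set RS

lemma cheb_growth (n : ℕ) (hn : 1 ≤ n) (p : ℝ[X]) (hdeg : p.natDegree ≤ n)
    (hb : ∀ t : ℝ, -1 ≤ t → t ≤ 1 → |p.eval t| ≤ 1) {s : ℝ} (hs : 1 ≤ s) :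
    p.eval s ≤ (Polynomial.Chebyshev.T ℝ n).eval s := by
  rcases eq_or_lt_of_le hs with rfl|hs1
  · rw [chebT_eval_one]
    exact (abs_le.1 (hb 1 (by norm_num) le_rfl)).2
  by_contra hcon
  push_neg at hcon
  have hT1 : 1 ≤ (Polynomial.Chebyshev.T ℝ n).eval s := chebT_one_le n hs
  have hps : 0 < p.eval s := by linarith
  set μ : ℝ := (Polynomial.Chebyshev.T ℝ n).eval s / p.eval s with hμdef
  have hμ0 : 0 < μ := div_pos (by linarith) hps
  have hμ1 : μ < 1 := (div_lt_one hps).2 hcon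
  set r : ℝ[X] := Polynomial.Chebyshev.T ℝ n - Polynomial.C μ * p with hrdef
  have hrs : r.eval s = 0 := by
    simp only [hrdef, eval_sub, eval_mul, eval_C, hμdef]
    field_simp
    ring
  have hrdeg : r.natDegree ≤ n := by
    refine le_trans (natDegree_sub_le _ _) (max_le (chebT_natDegree_le n) ?_)
    exact le_trans (natDegree_C_mul_le _ _) hdeg
  have npos : (0:ℝ) < n := by exact_mod_cast hn
  -- nodes
  set ξ : ℕ → ℝ := fun k => Real.cos (k * π / n) with hξdef
  have hθmem : ∀ k, k ≤ n → (k * π / n : ℝ) ∈ Icc 0 π := by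
    intro k hk
    constructor
    · positivity
    · rw [div_le_iff₀ npos]
      have : (k:ℝ) ≤ n := by exact_mod_cast hk
      nlinarith [Real.pi_pos]
  have hξanti : ∀ k k', k < k' → k' ≤ n → ξ k' < ξ k := by
    intro k k' hkk' hk'
    refine Real.strictAntiOn_cos (hθmem k (by omega)) (hθmem k' hk') ?_
    have hkr : (k:ℝ) < k' := by exact_mod_cast hkk'
    exact (div_lt_div_iff_of_pos_right npos).2 (by nlinarith [Real.pi_pos])
  have hξ_le_one : ∀ k, ξ k ≤ 1 := fun k => Real.cos_le_one _
  have hξ_ge : ∀ k, -1 ≤ ξ k := fun k => Real.neg_one_le_cos _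
  have hξ0 : ξ 0 = 1 := by simp [hξdef]
  have hTξ : ∀ k, k ≤ n → (Polynomial.Chebyshev.T ℝ n).eval (ξ k) = (-1)^k := by
    intro k hk
    rw [hξdef]
    simp only
    rw [Polynomial.Chebyshev.T_real_cos]
    have : ((n:ℤ):ℝ) * ((k:ℝ) * π / n) = 0 + (k:ℝ) * π := by
      push_cast
      field_simp
      ring
    rw [this]
    rw [show ((k:ℝ) * π) = ((k:ℕ):ℝ) * π from rfl, Real.cos_add_nat_mul_pi]
    simp
  have hrξ : ∀ k, k ≤ n → r.eval (ξ k) = (-1)^k - μ * p.eval (ξ k) := by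
    intro k hk
    simp only [hrdef, eval_sub, eval_mul, eval_C, hTξ k hk]
  have habsp : ∀ k, |p.eval (ξ k)| ≤ 1 := fun k => hb _ (hξ_ge k) (hξ_le_one k)
  have hμp : ∀ k, |μ * p.eval (ξ k)| < 1 := by
    intro k
    rw [abs_mul, abs_of_pos hμ0]
    calc μ * |p.eval (ξ k)| ≤ μ * 1 := by
          exact mul_le_mul_of_nonneg_left (habsp k) hμ0.le
      _ < 1 := by linarith
  have hsign : ∀ k, k ≤ n → (Even k → 0 < r.eval (ξ k)) ∧ (Odd k → r.eval (ξ k) < 0) := by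
    intro k hk
    have h1 := hμp k
    rw [abs_lt] at h1
    constructor
    · intro hev
      rw [hrξ k hk, hev.neg_one_pow]
      linarith
    · intro hodd
      rw [hrξ k hk, hodd.neg_one_pow]
      linarith
  -- roots between consecutive nodes
  have hroot : ∀ k : Fin n, ∃ z, z ∈ Ioo (ξ (k+1)) (ξ k) ∧ r.eval z = 0 := by
    intro ⟨k, hkn⟩
    simp only
    have hle : ξ (k+1) ≤ ξ k := (hξanti k (k+1) (by omega) (by omega)).le
    have hcont : ContinuousOn (fun t => r.eval t) (Icc (ξ (k+1)) (ξ k)) :=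
      (Polynomial.continuous r).continuousOn
    have hk1n : k + 1 ≤ n := by omega
    have hkn' : k ≤ n := by omega
    rcases Nat.even_or_odd k with hev | hodd
    · -- r (ξ k) > 0, r (ξ (k+1)) < 0
      have hpos := (hsign k hkn').1 hev
      have hneg := (hsign (k+1) hk1n).2 (Even.add_one hev)
      have : (0:ℝ) ∈ Icc (r.eval (ξ (k+1))) (r.eval (ξ k)) := ⟨hneg.le, hpos.le⟩
      obtain ⟨z, hz, hz0⟩ := intermediate_value_Icc hle hcont this
      refine ⟨z, ⟨?_, ?_⟩, hz0⟩
      · rcases eq_or_lt_of_le hz.1 with h|h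
        · exact absurd (h ▸ hz0) hneg.ne
        · exact h
      · rcases eq_or_lt_of_le hz.2 with h|h
        · exact absurd (h ▸ hz0) hpos.ne'
        · exact h
    · have hneg := (hsign k hkn').2 hodd
      have hpos := (hsign (k+1) hk1n).1 (Odd.add_one hodd)
      have : (0:ℝ) ∈ Icc (r.eval (ξ k)) (r.eval (ξ (k+1))) := ⟨hneg.le, hpos.le⟩
      obtain ⟨z, hz, hz0⟩ := intermediate_value_Icc' hle hcont this
      refine ⟨z, ⟨?_, ?_⟩, hz0⟩
      · rcases eq_or_lt_of_le hz.1 with h|h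
        · exact absurd (h ▸ hz0) hpos.ne'
        · exact h
      · rcases eq_or_lt_of_le hz.2 with h|h
        · exact absurd (h ▸ hz0) hneg.ne
        · exact h
  choose z hzmem hzroot using hroot
  have hzlt1 : ∀ k : Fin n, z k < 1 := fun k =>
    lt_of_lt_of_le (hzmem k).2 (hξ_le_one k)
  have hzanti : ∀ k k' : Fin n, (k:ℕ) < (k':ℕ) → z k' < z k := by
    intro k k' hlt
    have h1 : z k' < ξ (k'.1) := (hzmem k').2
    have h2 : ξ k'.1 ≤ ξ (k.1+1) := by
      rcases eq_or_lt_of_le (show k.1+1 ≤ k'.1 by omega) with h|h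
      · rw [h]
      · exact (hξanti _ _ h (by omega)).le
    have h3 : ξ (k.1+1) < z k := (hzmem k).1
    linarith
  have hzinj : Function.Injective z := by
    intro k k' hkk'
    rcases lt_trichotomy (k:ℕ) (k':ℕ) with h|h|h
    · exact absurd hkk' (hzanti k k' h).ne'
    · exact Fin.ext h
    · exact absurd hkk' (hzanti k' k h).ne
  -- the finset of n+1 roots
  classical
  set S : Finset ℝ := insert s (Finset.image z Finset.univ) with hSdef
  have hScard : n + 1 ≤ S.card := by
    rw [hSdef, Finset.card_insert_of_notMem]
    · rw [Finset.card_image_of_injective _ hzinj, Finset.card_univ, Fintype.card_fin]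
    · intro hmem
      rw [Finset.mem_image] at hmem
      obtain ⟨k, -, hk⟩ := hmem
      exact absurd (hk ▸ hzlt1 k) (by linarith)
  have hSroot : ∀ t ∈ S, r.eval t = 0 := by
    intro t ht
    rw [hSdef, Finset.mem_insert] at ht
    rcases ht with rfl | ht
    · exact hrs
    · rw [Finset.mem_image] at ht
      obtain ⟨k, -, rfl⟩ := ht
      exact hzroot k
  have hr0 : r = 0 :=
    Polynomial.eq_zero_of_natDegree_lt_card_of_eval_eq_zero' r S hSroot (by omega)
  have : r.eval (ξ 0) = 0 := by rw [hr0]; simp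
  rw [hrξ 0 (by omega)] at this
  have := hμp 0
  rw [abs_lt] at this
  simp only [pow_zero] at *
  linarith

end RS2


/-- A continuous polynomial of degree at most `n` on a real normed space: a finite sum of
diagonals of continuous `k`-linear forms, `k = 0,…,n`. -/
def IsPolyDegLE {X : Type*} [NormedAddCommGroup X] [NormedSpace ℝ X] (n : ℕ)
    (p : X → ℝ) : Prop :=
  ∃ L : (k : Fin (n + 1)) → ContinuousMultilinearMap ℝ (fun _ : Fin (k : ℕ) => X) ℝ,
    ∀ x : X, p x = ∑ k, L k (fun _ => x)

namespace RS3
open Polynomial Real Set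

variable {X : Type*} [NormedAddCommGroup X] [NormedSpace ℝ X]

lemma isPolyDegLE_comp (n : ℕ) (Q : ℝ[X]) (hQ : Q.natDegree ≤ n) (v : X →L[ℝ] ℝ) :
    IsPolyDegLE n (fun z => Q.eval (v z)) := by
  classical
  refine ⟨fun k => (Q.coeff (k:ℕ)) •
    ((ContinuousMultilinearMap.mkPiAlgebra ℝ (Fin (k:ℕ)) ℝ).compContinuousLinearMap
      (fun _ => v)), fun x => ?_⟩
  show Q.eval (v x) = _
  rw [Polynomial.eval_eq_sum_range' (lt_of_le_of_lt hQ (Nat.lt_succ_self n))]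
  rw [← Fin.sum_univ_eq_sum_range (fun i => Q.coeff i * (v x)^i) (n+1)]
  refine Finset.sum_congr rfl fun k _ => ?_
  simp only [ContinuousMultilinearMap.smul_apply,
    ContinuousMultilinearMap.compContinuousLinearMap_apply,
    ContinuousMultilinearMap.mkPiAlgebra_apply]
  rw [Finset.prod_const, Finset.card_univ, Fintype.card_fin]
  simp [smul_eq_mul]

lemma IsPolyDegLE.continuous {n : ℕ} {p : X → ℝ} (h : IsPolyDegLE n p) : Continuous p := by
  obtain ⟨L, hL⟩ := h
  have hp : p = fun x => ∑ k, L k (fun _ => x) := funext hL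
  rw [hp]
  exact continuous_finset_sum _ fun k _ =>
    (L k).cont.comp (continuous_pi fun _ => continuous_id)

lemma isPolyDegLE_restrict {n : ℕ} {p : X → ℝ} (h : IsPolyDegLE n p) (a b : X) :
    ∃ q : ℝ[X], q.natDegree ≤ n ∧ ∀ t : ℝ, q.eval t = p (b + t • (a - b)) := by
  classical
  obtain ⟨L, hL⟩ := h
  refine ⟨∑ k : Fin (n+1), ∑ S : Finset (Fin (k:ℕ)),
    Polynomial.C ((L k) (S.piecewise (fun _ => a - b) (fun _ => b))) * Polynomial.X ^ S.card,
    ?_, ?_⟩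
  · refine le_trans (Polynomial.natDegree_sum_le _ _) ?_
    rw [Finset.fold_max_le]
    refine ⟨Nat.zero_le n, fun k _ => ?_⟩
    refine le_trans (Polynomial.natDegree_sum_le _ _) ?_
    rw [Finset.fold_max_le]
    refine ⟨Nat.zero_le n, fun S _ => ?_⟩
    refine le_trans (Polynomial.natDegree_C_mul_le _ _) ?_
    rw [Polynomial.natDegree_X_pow]
    calc S.card ≤ (k:ℕ) := by
          simpa using Finset.card_le_card (Finset.subset_univ S)
      _ ≤ n := by omega
  · intro t
    rw [hL]
    rw [Polynomial.eval_finset_sum]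
    refine Finset.sum_congr rfl fun k _ => ?_
    rw [Polynomial.eval_finset_sum]
    have h2 : ∀ S : Finset (Fin (k:ℕ)),
        (L k).toMultilinearMap (S.piecewise (fun _ => t • (a - b)) (fun _ => b)) =
          t ^ S.card * (L k) (S.piecewise (fun _ => a - b) (fun _ => b)) := by
      intro S
      have hpw : S.piecewise (fun _ : Fin (k:ℕ) => t • (a - b)) (fun _ => b) =
          S.piecewise (fun i => t • (S.piecewise (fun _ : Fin (k:ℕ) => a - b) (fun _ => b)) i)
            (S.piecewise (fun _ : Fin (k:ℕ) => a - b) (fun _ => b)) := by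
        funext i
        by_cases hi : i ∈ S
        · simp [Finset.piecewise_eq_of_mem _ _ _ hi]
        · simp [Finset.piecewise_eq_of_notMem _ _ _ hi]
      rw [hpw, (L k).toMultilinearMap.map_piecewise_smul (fun _ => t)
        (S.piecewise (fun _ : Fin (k:ℕ) => a - b) (fun _ => b)) S, Finset.prod_const]
      simp [smul_eq_mul]
    have h0 : (L k) (fun _ : Fin (k:ℕ) => b + t • (a - b)) =
        (L k).toMultilinearMap ((fun _ : Fin (k:ℕ) => t • (a - b)) + (fun _ => b)) := by
      rw [ContinuousMultilinearMap.coe_coe]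
      congr 1
      funext i
      simp [add_comm]
    rw [h0, (L k).toMultilinearMap.map_add_univ]
    refine Finset.sum_congr rfl fun S _ => ?_
    rw [h2 S]
    simp only [Polynomial.eval_mul, Polynomial.eval_C, Polynomial.eval_pow, Polynomial.eval_X]
    ring

end RS3


/-- Support functional `h(K,u) = sup_K u`. -/
noncomputable def suppFn {X : Type*} [NormedAddCommGroup X] [NormedSpace ℝ X]
    (K : Set X) (u : X →L[ℝ] ℝ) : ℝ :=
  sSup ((fun z => u z) '' K)

/-- The generalized Minkowski functional `α(K,x)`: the infimum of dilation factors `λ ≥ 0`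
such that `x` belongs to every `λ`-dilated supporting layer of `K`. -/
noncomputable def genMinkowski {X : Type*} [NormedAddCommGroup X] [NormedSpace ℝ X]
    (K : Set X) (x : X) : ℝ :=
  sInf {l : ℝ | 0 ≤ l ∧ ∀ u : X →L[ℝ] ℝ, ‖u‖ = 1 →
    |u x - (suppFn K u - suppFn K (-u)) / 2| ≤ l * (suppFn K u + suppFn K (-u)) / 2}

section Geo
open Polynomial Real Set

variable {X : Type*} [NormedAddCommGroup X] [NormedSpace ℝ X]

set_option maxHeartbeats 1000000 in
theorem chebyshev_convex_body' (K : Set X) (hconv : Convex ℝ K) (hcl : IsClosed K)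
    (hbd : Bornology.IsBounded K)
    (hint : (interior K).Nonempty) (x : X) (hx : x ∉ K) (n : ℕ) (hn : 1 ≤ n) :
    sSup {y : ℝ | ∃ p : X → ℝ, IsPolyDegLE n p ∧ (∀ z ∈ K, |p z| ≤ 1) ∧ y = p x} =
        (Polynomial.Chebyshev.T ℝ n).eval (genMinkowski K x) ∧
      ∃ v : X →L[ℝ] ℝ, ‖v‖ = 1 ∧
        IsPolyDegLE n (fun z => (Polynomial.Chebyshev.T ℝ n).eval
          ((2 * v z - suppFn K v + suppFn K (-v)) / (suppFn K v + suppFn K (-v)))) ∧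
        (∀ z ∈ K, |(Polynomial.Chebyshev.T ℝ n).eval
          ((2 * v z - suppFn K v + suppFn K (-v)) / (suppFn K v + suppFn K (-v)))| ≤ 1) ∧
        (Polynomial.Chebyshev.T ℝ n).eval
            ((2 * v x - suppFn K v + suppFn K (-v)) / (suppFn K v + suppFn K (-v))) =
          (Polynomial.Chebyshev.T ℝ n).eval (genMinkowski K x) := by
  classical
  obtain ⟨z₀, hz₀⟩ := hint
  have hz₀K : z₀ ∈ K := interior_subset hz₀
  have hKne : K.Nonempty := ⟨z₀, hz₀K⟩
  obtain ⟨r, hr0, hball⟩ : ∃ r > 0, Metric.ball z₀ r ⊆ K := by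
    obtain ⟨r, hr0, hb⟩ := Metric.isOpen_iff.1 isOpen_interior z₀ hz₀
    exact ⟨r, hr0, hb.trans interior_subset⟩
  obtain ⟨R₀, hR₀⟩ := hbd.subset_closedBall 0
  set R : ℝ := max R₀ 1 with hRdef
  have hR1 : (1:ℝ) ≤ R := le_max_right _ _
  have hR0 : (0:ℝ) < R := lt_of_lt_of_le one_pos hR1
  have hzR : ∀ z ∈ K, ‖z‖ ≤ R := by
    intro z hz
    have := hR₀ hz
    rw [Metric.mem_closedBall, dist_zero_right] at this
    exact this.trans (le_max_left _ _)
  have hBdd : ∀ u : X →L[ℝ] ℝ, BddAbove ((fun z => u z) '' K) := by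
    intro u
    refine ⟨‖u‖ * R, ?_⟩
    rintro _ ⟨z, hz, rfl⟩
    calc u z ≤ ‖u z‖ := le_abs_self _
      _ ≤ ‖u‖ * ‖z‖ := u.le_opNorm z
      _ ≤ ‖u‖ * R := by
        exact mul_le_mul_of_nonneg_left (hzR z hz) (norm_nonneg u)
  have hle_h : ∀ (u : X →L[ℝ] ℝ), ∀ z ∈ K, u z ≤ suppFn K u := by
    intro u z hz
    exact le_csSup (hBdd u) ⟨z, hz, rfl⟩
  have habs_h : ∀ u : X →L[ℝ] ℝ, ‖u‖ = 1 → |suppFn K u| ≤ R := by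
    intro u hu
    rw [abs_le]
    constructor
    · calc -R ≤ -‖z₀‖ := by
            have := hzR z₀ hz₀K; linarith
        _ ≤ u z₀ := by
            have : ‖u z₀‖ ≤ ‖u‖ * ‖z₀‖ := u.le_opNorm z₀
            rw [hu, one_mul] at this
            have := neg_abs_le (u z₀)
            simp only [Real.norm_eq_abs] at *
            linarith
        _ ≤ suppFn K u := hle_h u z₀ hz₀K
    · refine csSup_le (hKne.image _) ?_
      rintro _ ⟨z, hz, rfl⟩
      calc u z ≤ ‖u z‖ := le_abs_self _
        _ ≤ ‖u‖ * ‖z‖ := u.le_opNorm z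
        _ ≤ R := by rw [hu, one_mul]; exact hzR z hz
  -- width lower bound
  have hhalfdir : ∀ u : X →L[ℝ] ℝ, ‖u‖ = 1 → u z₀ + r/4 ≤ suppFn K u := by
    intro u hu
    obtain ⟨y, hy1, hy2⟩ := u.exists_lt_apply_of_lt_opNorm (r := 1/2) (by rw [hu]; norm_num)
    set y' : X := if 0 ≤ u y then y else -y with hy'def
    have hy'n : ‖y'‖ < 1 := by
      rw [hy'def]; split <;> simpa
    have hy'v : 1/2 < u y' := by
      rw [hy'def]
      rcases le_or_gt 0 (u y) with h|h
      · rw [if_pos h]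
        rwa [Real.norm_eq_abs, abs_of_nonneg h] at hy2
      · rw [if_neg (not_le.2 h), map_neg]
        rwa [Real.norm_eq_abs, abs_of_neg h] at hy2
    have hmem : z₀ + (r/2) • y' ∈ K := by
      apply hball
      rw [Metric.mem_ball, dist_eq_norm]
      have : z₀ + (r/2) • y' - z₀ = (r/2) • y' := by abel
      rw [this, norm_smul, Real.norm_eq_abs, abs_of_pos (by linarith)]
      nlinarith
    have := hle_h u _ hmem
    rw [map_add, map_smul] at this
    have : u z₀ + (r/2) * (u y') ≤ suppFn K u := this
    nlinarith
  have hwlb : ∀ u : X →L[ℝ] ℝ, ‖u‖ = 1 → r/2 ≤ suppFn K u + suppFn K (-u) := by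
    intro u hu
    have h1 := hhalfdir u hu
    have h2 := hhalfdir (-u) (by rwa [norm_neg])
    rw [ContinuousLinearMap.neg_apply] at h2
    linarith
  have hwpos : ∀ u : X →L[ℝ] ℝ, ‖u‖ = 1 → 0 < suppFn K u + suppFn K (-u) := by
    intro u hu
    linarith [hwlb u hu]
  -- the defining set of genMinkowski
  set S' : Set ℝ := {l : ℝ | 0 ≤ l ∧ ∀ u : X →L[ℝ] ℝ, ‖u‖ = 1 →
    |u x - (suppFn K u - suppFn K (-u)) / 2| ≤ l * (suppFn K u + suppFn K (-u)) / 2}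
    with hS'def
  have hgm : genMinkowski K x = sInf S' := rfl
  have hS'ne : S'.Nonempty := by
    refine ⟨(‖x‖ + R) / (r/4), ?_, ?_⟩
    · positivity
    · intro u hu
      have h1 : |u x - (suppFn K u - suppFn K (-u)) / 2| ≤ ‖x‖ + R := by
        have hux : |u x| ≤ ‖x‖ := by
          have := u.le_opNorm x
          rw [hu, one_mul] at this
          simpa [Real.norm_eq_abs] using this
        have ha := habs_h u hu
        have hb := habs_h (-u) (by rwa [norm_neg])
        rw [abs_le] at hux ha hb ⊢
        constructor <;> [skip; skip] <;>
          · obtain ⟨h1, h2⟩ := hux; obtain ⟨h3, h4⟩ := ha; obtain ⟨h5, h6⟩ := hb; linarith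
      have h2 : ‖x‖ + R ≤ (‖x‖ + R) / (r/4) * (suppFn K u + suppFn K (-u)) / 2 := by
        have hL0 : (0:ℝ) ≤ (‖x‖ + R) / (r/4) := by positivity
        have hkey : (‖x‖ + R) / (r/4) * (r/2) / 2 = ‖x‖ + R := by
          rw [mul_div_assoc, show (r/2)/2 = r/4 by ring, div_mul_cancel₀]
          positivity
        have hmono := mul_le_mul_of_nonneg_left (hwlb u hu) hL0
        rw [mul_comm ((‖x‖ + R) / (r/4)) (r/2)] at hkey
        linarith
      linarith
  have hS'bdd : BddBelow S' := ⟨0, fun l hl => hl.1⟩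
  have hS'cl : IsClosed S' := by
    have : S' = Set.Ici (0:ℝ) ∩ ⋂ (u : X →L[ℝ] ℝ) (_ : ‖u‖ = 1),
        {l : ℝ | |u x - (suppFn K u - suppFn K (-u)) / 2|
          ≤ l * (suppFn K u + suppFn K (-u)) / 2} := by
      ext l
      simp only [hS'def, Set.mem_setOf_eq, Set.mem_inter_iff, Set.mem_Ici, Set.mem_iInter]
    rw [this]
    refine IsClosed.inter isClosed_Ici ?_
    refine isClosed_iInter fun u => isClosed_iInter fun _ => ?_
    exact isClosed_le continuous_const (by fun_prop)
  set α : ℝ := genMinkowski K x with hαdef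
  have hαmem : α ∈ S' := by
    rw [hgm]
    exact hS'cl.csInf_mem hS'ne hS'bdd
  have hxKα : ∀ u : X →L[ℝ] ℝ, ‖u‖ = 1 →
      |u x - (suppFn K u - suppFn K (-u)) / 2| ≤ α * (suppFn K u + suppFn K (-u)) / 2 :=
    hαmem.2
  -- α > 1
  have hα1 : 1 < α := by
    obtain ⟨f, u', hfK, hfx⟩ := geometric_hahn_banach_closed_point hconv hcl hx
    have hfne : f ≠ 0 := by
      intro h0
      rw [h0] at hfK hfx
      have := hfK z₀ hz₀K
      simp only [ContinuousLinearMap.zero_apply] at this hfx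
      linarith
    set v₁ : X →L[ℝ] ℝ := ‖f‖⁻¹ • f with hv₁def
    have hfn0 : (0:ℝ) < ‖f‖ := norm_pos_iff.2 hfne
    have hv₁ : ‖v₁‖ = 1 := by
      rw [hv₁def, norm_smul (α := ℝ) (β := X →L[ℝ] ℝ)]
      simp [inv_mul_cancel₀ hfn0.ne']
    have hsup : suppFn K v₁ ≤ ‖f‖⁻¹ * u' := by
      refine csSup_le (hKne.image _) ?_
      rintro _ ⟨z, hz, rfl⟩
      have : f z ≤ u' := (hfK z hz).le
      simp only [hv₁def, ContinuousLinearMap.smul_apply, smul_eq_mul]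
      exact mul_le_mul_of_nonneg_left this (by positivity)
    have hv₁x : suppFn K v₁ < v₁ x := by
      have : ‖f‖⁻¹ * u' < ‖f‖⁻¹ * f x := by
        exact mul_lt_mul_of_pos_left hfx (by positivity)
      calc suppFn K v₁ ≤ ‖f‖⁻¹ * u' := hsup
        _ < ‖f‖⁻¹ * f x := this
        _ = v₁ x := by simp [hv₁def]
    have hxK := hxKα v₁ hv₁
    have hwp := hwpos v₁ hv₁
    have h1 : v₁ x - (suppFn K v₁ - suppFn K (-v₁)) / 2
        > (suppFn K v₁ + suppFn K (-v₁)) / 2 := by linarith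
    have h2 : v₁ x - (suppFn K v₁ - suppFn K (-v₁)) / 2
        ≤ α * (suppFn K v₁ + suppFn K (-v₁)) / 2 := (abs_le.1 hxK).2
    nlinarith
  have hdir : ∀ u : X →L[ℝ] ℝ, ‖u‖ = 1 → ∃ y : X, ‖y‖ < 1 ∧ 1/2 < u y := by
    intro u hu
    obtain ⟨y, hy1, hy2⟩ := u.exists_lt_apply_of_lt_opNorm (r := 1/2) (by rw [hu]; norm_num)
    refine ⟨if 0 ≤ u y then y else -y, by split <;> simpa, ?_⟩
    rcases le_or_gt 0 (u y) with h|h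
    · rw [if_pos h]
      rwa [Real.norm_eq_abs, abs_of_nonneg h] at hy2
    · rw [if_neg (not_le.2 h), map_neg]
      rwa [Real.norm_eq_abs, abs_of_neg h] at hy2
  have hhalf : ∀ u : X →L[ℝ] ℝ, ‖u‖ = 1 → ∀ z ∈ K,
      |u z - (suppFn K u - suppFn K (-u)) / 2| ≤ (suppFn K u + suppFn K (-u)) / 2 := by
    intro u hu z hz
    have h1 := hle_h u z hz
    have h2 := hle_h (-u) z hz
    rw [ContinuousLinearMap.neg_apply] at h2
    rw [abs_le]
    constructor <;> linarith
  set Kα : Set X := {y : X | ∀ u : X →L[ℝ] ℝ, ‖u‖ = 1 →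
      |u y - (suppFn K u - suppFn K (-u)) / 2| ≤ α * (suppFn K u + suppFn K (-u)) / 2}
    with hKαdef
  have hKsub : K ⊆ Kα := by
    intro z hz u hu
    have h1 := hhalf u hu z hz
    have hw := (hwpos u hu).le
    nlinarith [hα1]
  have hKαconv : Convex ℝ Kα := by
    intro y hy y' hy' aa bb ha hb hab u hu
    have h1 := hy u hu
    have h2 := hy' u hu
    have hid : u (aa • y + bb • y') - (suppFn K u - suppFn K (-u)) / 2
        = aa * (u y - (suppFn K u - suppFn K (-u)) / 2)
          + bb * (u y' - (suppFn K u - suppFn K (-u)) / 2) := by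
      rw [map_add, map_smul, map_smul]
      simp only [smul_eq_mul]
      linear_combination ((suppFn K u - suppFn K (-u))/2) * hab
    rw [hid]
    have e0 : |aa * (u y - (suppFn K u - suppFn K (-u)) / 2)
          + bb * (u y' - (suppFn K u - suppFn K (-u)) / 2)|
        ≤ aa * |u y - (suppFn K u - suppFn K (-u)) / 2|
          + bb * |u y' - (suppFn K u - suppFn K (-u)) / 2| := by
      refine le_trans (abs_add_le _ _) ?_
      rw [abs_mul, abs_mul, abs_of_nonneg ha, abs_of_nonneg hb]
    have e1 := mul_le_mul_of_nonneg_left h1 ha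
    have e2 := mul_le_mul_of_nonneg_left h2 hb
    have e3 : aa * (α * (suppFn K u + suppFn K (-u)) / 2)
        + bb * (α * (suppFn K u + suppFn K (-u)) / 2)
        = α * (suppFn K u + suppFn K (-u)) / 2 := by
      linear_combination (α * (suppFn K u + suppFn K (-u)) / 2) * hab
    linarith [e0, e1, e2, e3]
  have hKαcl : IsClosed Kα := by
    have : Kα = ⋂ (u : X →L[ℝ] ℝ) (_ : ‖u‖ = 1),
        {y : X | |u y - (suppFn K u - suppFn K (-u)) / 2|
          ≤ α * (suppFn K u + suppFn K (-u)) / 2} := by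
      ext y
      simp only [hKαdef, Set.mem_setOf_eq, Set.mem_iInter]
    rw [this]
    refine isClosed_iInter fun u => isClosed_iInter fun _ => ?_
    exact isClosed_le (by fun_prop) continuous_const
  have hz₀int : z₀ ∈ interior Kα :=
    mem_interior.2 ⟨Metric.ball z₀ r, fun y hy => hKsub (hball hy), Metric.isOpen_ball,
      Metric.mem_ball_self hr0⟩
  have hxKαmem : x ∈ Kα := fun u hu => hxKα u hu
  have hxnotint : x ∉ interior Kα := by
    intro hxin
    obtain ⟨ε, hε0, hεsub⟩ := Metric.isOpen_iff.1 isOpen_interior x hxin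
    set ε' : ℝ := min (ε/2) R with hε'def
    have hε'0 : 0 < ε' := lt_min (by linarith) hR0
    have hε'R : ε' ≤ R := min_le_right _ _
    have hε'ε : ε' ≤ ε/2 := min_le_left _ _
    have hclaim : α - ε'/(2*R) ∈ S' := by
      constructor
      · have : ε'/(2*R) ≤ 1/2 := by
          rw [div_le_iff₀ (by positivity)]
          nlinarith
        linarith [hα1]
      · intro u hu
        obtain ⟨y, hyn, hyv⟩ := hdir u hu
        have hmem : ∀ s : ℝ, |s| ≤ ε' → x + s • y ∈ Kα := by
          intro s hs
          apply interior_subset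
          apply hεsub
          rw [Metric.mem_ball, dist_eq_norm]
          have hxx : x + s • y - x = s • y := by abel
          rw [hxx, norm_smul, Real.norm_eq_abs]
          calc |s| * ‖y‖ ≤ ε' * 1 :=
                mul_le_mul hs hyn.le (norm_nonneg y) hε'0.le
            _ ≤ ε/2 := by linarith
            _ < ε := by linarith
        have hw0 := hwpos u hu
        have hwR : suppFn K u + suppFn K (-u) ≤ 2*R := by
          have q1 := habs_h u hu
          have q2 := habs_h (-u) (by rwa [norm_neg])
          rw [abs_le] at q1 q2
          linarith [q1.2, q2.2]
        have hkey : |u x - (suppFn K u - suppFn K (-u)) / 2|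
            ≤ α * (suppFn K u + suppFn K (-u)) / 2 - ε'/2 := by
          rcases le_or_gt 0 (u x - (suppFn K u - suppFn K (-u)) / 2) with hsgn|hsgn
          · have h1 := hmem ε' (by rw [abs_of_pos hε'0])
            have h2 := h1 u hu
            rw [map_add, map_smul] at h2
            simp only [smul_eq_mul] at h2
            have h3 := (abs_le.1 h2).2
            rw [abs_of_nonneg hsgn]
            nlinarith
          · have h1 := hmem (-ε') (by rw [abs_neg, abs_of_pos hε'0])
            have h2 := h1 u hu
            rw [map_add, map_smul] at h2
            simp only [smul_eq_mul] at h2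
            have h3 := (abs_le.1 h2).1
            rw [abs_of_neg hsgn]
            nlinarith
        have hstep : α * (suppFn K u + suppFn K (-u)) / 2 - ε'/2
            ≤ (α - ε'/(2*R)) * (suppFn K u + suppFn K (-u)) / 2 := by
          have hq : ε'/(2*R) * (suppFn K u + suppFn K (-u)) ≤ ε' := by
            rw [div_mul_eq_mul_div, div_le_iff₀ (by positivity)]
            nlinarith
          nlinarith
        linarith
    have hcontra : α ≤ α - ε'/(2*R) := by
      calc α = sInf S' := hgm
        _ ≤ α - ε'/(2*R) := csInf_le hS'bdd hclaim
    have : 0 < ε'/(2*R) := by positivity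
    linarith
  obtain ⟨f, hf⟩ := geometric_hahn_banach_open_point (hKαconv.interior) isOpen_interior hxnotint
  have hfz₀ : f z₀ < f x := hf z₀ hz₀int
  have hfne : f ≠ 0 := by
    intro h0
    rw [h0] at hfz₀
    simp at hfz₀
  have hfn0 : (0:ℝ) < ‖f‖ := norm_pos_iff.2 hfne
  have hfKα : ∀ y ∈ Kα, f y ≤ f x := by
    intro y hy
    have hcont : Continuous fun t : ℝ => f (t • z₀ + (1-t) • y) := by fun_prop
    have h0 : (fun t : ℝ => f (t • z₀ + (1-t) • y)) 0 = f y := by norm_num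
    have htend : Filter.Tendsto (fun t : ℝ => f (t • z₀ + (1-t) • y))
        (nhdsWithin 0 (Set.Ioi 0)) (nhds (f y)) := by
      rw [← h0]
      exact (hcont.tendsto 0).mono_left nhdsWithin_le_nhds
    refine le_of_tendsto htend ?_
    filter_upwards [Ioo_mem_nhdsGT_of_mem (Set.mem_Ico.2 ⟨le_refl (0:ℝ), one_pos⟩)] with t ht
    exact (hf _ (hKαconv.combo_interior_closure_mem_interior hz₀int (subset_closure hy)
      ht.1 (by linarith [ht.2.le]) (by ring))).le
  set v : X →L[ℝ] ℝ := ‖f‖⁻¹ • f with hvdef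
  have hv : ‖v‖ = 1 := by
    rw [hvdef, norm_smul (α := ℝ) (β := X →L[ℝ] ℝ)]
    simp [inv_mul_cancel₀ hfn0.ne']
  have hvapp : ∀ y : X, v y = ‖f‖⁻¹ * f y := fun y => rfl
  have hvKα : ∀ y ∈ Kα, v y ≤ v x := by
    intro y hy
    rw [hvapp, hvapp]
    exact mul_le_mul_of_nonneg_left (hfKα y hy) (by positivity)
  have hMsub : ∀ a ∈ K, ∀ b ∈ K, ((1+α)/2) • a + ((1-α)/2) • b ∈ Kα := by
    intro a ha b hb u hu
    have h1 := hhalf u hu a ha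
    have h2 := hhalf u hu b hb
    have hid : u (((1+α)/2) • a + ((1-α)/2) • b) - (suppFn K u - suppFn K (-u))/2
        = ((1+α)/2) * (u a - (suppFn K u - suppFn K (-u))/2)
          + ((1-α)/2) * (u b - (suppFn K u - suppFn K (-u))/2) := by
      rw [map_add, map_smul, map_smul]
      simp only [smul_eq_mul]
      ring
    rw [hid]
    have e0 : |((1+α)/2) * (u a - (suppFn K u - suppFn K (-u))/2)
          + ((1-α)/2) * (u b - (suppFn K u - suppFn K (-u))/2)|
        ≤ ((1+α)/2) * |u a - (suppFn K u - suppFn K (-u))/2|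
          + ((α-1)/2) * |u b - (suppFn K u - suppFn K (-u))/2| := by
      refine le_trans (abs_add_le _ _) ?_
      rw [abs_mul, abs_mul, abs_of_nonneg (by linarith : (0:ℝ) ≤ (1+α)/2),
        abs_of_nonpos (by linarith : ((1:ℝ)-α)/2 ≤ 0)]
      have : -((1 - α) / 2) = (α-1)/2 := by ring
      rw [this]
    have e1 := mul_le_mul_of_nonneg_left h1 (by linarith : (0:ℝ) ≤ (1+α)/2)
    have e2 := mul_le_mul_of_nonneg_left h2 (by linarith : (0:ℝ) ≤ (α-1)/2)
    nlinarith [e0, e1, e2]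
  have happrox : ∀ u : X →L[ℝ] ℝ, ‖u‖ = 1 → ∀ d : ℝ,
      (∀ a ∈ K, ∀ b ∈ K, u (((1+α)/2) • a + ((1-α)/2) • b) ≤ d) →
      α * (suppFn K u + suppFn K (-u))/2 ≤ d - (suppFn K u - suppFn K (-u))/2 := by
    intro u hu d hle
    by_contra hcon
    push_neg at hcon
    set δ : ℝ := α * (suppFn K u + suppFn K (-u))/2
      - (d - (suppFn K u - suppFn K (-u))/2) with hδdef
    have hδ0 : 0 < δ := by simp only [hδdef]; linarith
    have hα0 : (0:ℝ) < α := by linarith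
    set ε : ℝ := δ / (2*α) with hεdef
    have hε0 : 0 < ε := by positivity
    obtain ⟨a, ha, hav⟩ : ∃ a ∈ K, suppFn K u - ε < u a := by
      obtain ⟨yy, hyy, hgt⟩ := exists_lt_of_lt_csSup (hKne.image _)
        (show suppFn K u - ε < suppFn K u by linarith)
      obtain ⟨a, ha, rfl⟩ := hyy
      exact ⟨a, ha, hgt⟩
    obtain ⟨b, hb, hbv⟩ : ∃ b ∈ K, suppFn K (-u) - ε < -(u b) := by
      obtain ⟨yy, hyy, hgt⟩ := exists_lt_of_lt_csSup (hKne.image _)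
        (show suppFn K (-u) - ε < suppFn K (-u) by linarith)
      obtain ⟨b, hb, rfl⟩ := hyy
      exact ⟨b, hb, by simpa using hgt⟩
    have hlex := hle a ha b hb
    rw [map_add, map_smul, map_smul] at hlex
    simp only [smul_eq_mul] at hlex
    have q1 : (1+α)/2 * (suppFn K u - ε) ≤ (1+α)/2 * u a :=
      mul_le_mul_of_nonneg_left hav.le (by linarith)
    have hub' : u b ≤ -(suppFn K (-u)) + ε := by linarith
    have q2 : (1-α)/2 * (-(suppFn K (-u)) + ε) ≤ (1-α)/2 * u b :=
      mul_le_mul_of_nonpos_left hub' (by linarith)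
    have hident : (1+α)/2 * (suppFn K u - ε) + (1-α)/2 * (-(suppFn K (-u)) + ε)
        = (suppFn K u - suppFn K (-u))/2 + α*(suppFn K u + suppFn K (-u))/2 - α*ε := by
      ring
    have hαε : α * ε = δ/2 := by
      rw [hεdef]
      field_simp
    linarith
  have hvub := (abs_le.1 (hxKα v hv)).2
  have hvlb := happrox v hv (v x) (fun a ha b hb => hvKα _ (hMsub a ha b hb))
  have hveq : v x - (suppFn K v - suppFn K (-v))/2
      = α * (suppFn K v + suppFn K (-v))/2 := le_antisymm hvub hvlb
  have hwv := hwpos v hv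
  have hargx : (2 * v x - suppFn K v + suppFn K (-v)) / (suppFn K v + suppFn K (-v)) = α := by
    rw [div_eq_iff hwv.ne']
    linarith
  -- upper bound for all admissible polynomials
  have hub : ∀ p : X → ℝ, IsPolyDegLE n p → (∀ z ∈ K, |p z| ≤ 1) →
      p x ≤ (Polynomial.Chebyshev.T ℝ n).eval α := by
    intro p hpoly hpb
    have hA : ∀ a ∈ K, ∀ b ∈ K,
        p (((1+α)/2) • a + ((1-α)/2) • b) ≤ (Polynomial.Chebyshev.T ℝ n).eval α := by
      intro a ha b hb
      obtain ⟨q, hqdeg, hq⟩ := RS3.isPolyDegLE_restrict hpoly a b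
      set g : ℝ[X] := Polynomial.C (1/2) * Polynomial.X + Polynomial.C (1/2) with hgdef
      have hgdeg : g.natDegree ≤ 1 := by
        refine le_trans (Polynomial.natDegree_add_le _ _) (max_le ?_ ?_)
        · exact le_trans (Polynomial.natDegree_C_mul_le _ _) (by simp)
        · simp
      set q' : ℝ[X] := q.comp g with hq'def
      have hq'deg : q'.natDegree ≤ n := by
        refine le_trans (Polynomial.natDegree_comp_le) ?_
        calc q.natDegree * g.natDegree ≤ n * 1 := Nat.mul_le_mul hqdeg hgdeg
          _ = n := by omega
      have hq'eval : ∀ τ : ℝ, q'.eval τ = q.eval ((τ+1)/2) := by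
        intro τ
        rw [hq'def, Polynomial.eval_comp, hgdef]
        simp only [Polynomial.eval_add, Polynomial.eval_mul, Polynomial.eval_C,
          Polynomial.eval_X]
        congr 1
        ring
      have hq'b : ∀ t : ℝ, -1 ≤ t → t ≤ 1 → |q'.eval t| ≤ 1 := by
        intro t ht1 ht2
        rw [hq'eval, hq]
        have hidpt : b + ((t+1)/2) • (a - b) = ((t+1)/2) • a + (1 - (t+1)/2) • b := by
          rw [smul_sub, sub_smul, one_smul]
          abel
        rw [hidpt]
        exact hpb _ (hconv ha hb (by linarith) (by linarith) (by ring))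
      have hgrow := RS2.cheb_growth n hn q' hq'deg hq'b (s := α) hα1.le
      have hpt : b + ((α+1)/2) • (a - b) = ((1+α)/2) • a + ((1-α)/2) • b := by
        have hco : ((1-α)/2 : ℝ) = 1 - (α+1)/2 := by ring
        have hco2 : ((1+α)/2 : ℝ) = (α+1)/2 := by ring
        rw [hco, hco2, sub_smul, one_smul, smul_sub]
        abel
      calc p (((1+α)/2) • a + ((1-α)/2) • b) = q'.eval α := by
            rw [hq'eval, hq, hpt]
        _ ≤ (Polynomial.Chebyshev.T ℝ n).eval α := hgrow
    set Mα : Set X := {y : X | ∃ a ∈ K, ∃ b ∈ K, y = ((1+α)/2) • a + ((1-α)/2) • b}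
      with hMdef
    have hz₀M : z₀ ∈ Mα := by
      refine ⟨z₀, hz₀K, z₀, hz₀K, ?_⟩
      rw [← add_smul, show ((1+α)/2 + (1-α)/2 : ℝ) = 1 by ring, one_smul]
    have hMconv : Convex ℝ Mα := by
      rintro y ⟨a, ha, b, hb, rfl⟩ y' ⟨a', ha', b', hb', rfl⟩ s t hs ht hst
      refine ⟨s • a + t • a', hconv ha ha' hs ht hst,
        s • b + t • b', hconv hb hb' hs ht hst, ?_⟩
      module
    have hxcl : x ∈ closure Mα := by
      by_contra hxcl
      obtain ⟨g₂, u', hgM, hgx⟩ :=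
        geometric_hahn_banach_closed_point (hMconv.closure) isClosed_closure hxcl
      have hgne : g₂ ≠ 0 := by
        intro h0
        rw [h0] at hgM hgx
        have := hgM z₀ (subset_closure hz₀M)
        simp only [ContinuousLinearMap.zero_apply] at this hgx
        linarith
      have hgn0 : (0:ℝ) < ‖g₂‖ := norm_pos_iff.2 hgne
      set v₂ : X →L[ℝ] ℝ := ‖g₂‖⁻¹ • g₂ with hv₂def
      have hv₂ : ‖v₂‖ = 1 := by
        rw [hv₂def, norm_smul (α := ℝ) (β := X →L[ℝ] ℝ)]
        simp [inv_mul_cancel₀ hgn0.ne']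
      have hv₂app : ∀ y : X, v₂ y = ‖g₂‖⁻¹ * g₂ y := fun y => rfl
      have hle2 : ∀ a ∈ K, ∀ b ∈ K,
          v₂ (((1+α)/2) • a + ((1-α)/2) • b) ≤ ‖g₂‖⁻¹ * u' := by
        intro a ha b hb
        rw [hv₂app]
        refine mul_le_mul_of_nonneg_left ?_ (by positivity)
        exact (hgM _ (subset_closure ⟨a, ha, b, hb, rfl⟩)).le
      have hlow := happrox v₂ hv₂ (‖g₂‖⁻¹ * u') hle2
      have hupp := (abs_le.1 (hxKα v₂ hv₂)).2
      have hx2 : ‖g₂‖⁻¹ * u' < v₂ x := by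
        rw [hv₂app]
        exact mul_lt_mul_of_pos_left hgx (by positivity)
      linarith
    have hMbound : Mα ⊆ {y : X | p y ≤ (Polynomial.Chebyshev.T ℝ n).eval α} := by
      rintro y ⟨a, ha, b, hb, rfl⟩
      exact hA a ha b hb
    have hclosed : IsClosed {y : X | p y ≤ (Polynomial.Chebyshev.T ℝ n).eval α} :=
      isClosed_le (RS3.IsPolyDegLE.continuous hpoly) continuous_const
    exact closure_minimal hMbound hclosed hxcl
  -- the extremal polynomial
  set Q : ℝ[X] := (Polynomial.Chebyshev.T ℝ n).comp
    (Polynomial.C (2/(suppFn K v + suppFn K (-v))) * Polynomial.X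
      + Polynomial.C ((suppFn K (-v) - suppFn K v)/(suppFn K v + suppFn K (-v)))) with hQdef
  have hQdeg : Q.natDegree ≤ n := by
    refine le_trans (Polynomial.natDegree_comp_le) ?_
    have h1 := RS.chebT_natDegree_le n
    have h2 : (Polynomial.C (2/(suppFn K v + suppFn K (-v))) * Polynomial.X
        + Polynomial.C ((suppFn K (-v) - suppFn K v)/(suppFn K v + suppFn K (-v)))
          : ℝ[X]).natDegree ≤ 1 := by
      refine le_trans (Polynomial.natDegree_add_le _ _) (max_le ?_ ?_)
      · exact le_trans (Polynomial.natDegree_C_mul_le _ _) (by simp)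
      · simp
    calc (Polynomial.Chebyshev.T ℝ n).natDegree * _ ≤ n * 1 := Nat.mul_le_mul h1 h2
      _ = n := by omega
  have hQeval : ∀ t : ℝ, Q.eval t = (Polynomial.Chebyshev.T ℝ n).eval
      ((2 * t - suppFn K v + suppFn K (-v)) / (suppFn K v + suppFn K (-v))) := by
    intro t
    rw [hQdef, Polynomial.eval_comp]
    congr 1
    simp only [Polynomial.eval_add, Polynomial.eval_mul, Polynomial.eval_C,
      Polynomial.eval_X]
    field_simp
    ring
  have hPpoly : IsPolyDegLE n (fun z => (Polynomial.Chebyshev.T ℝ n).eval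
      ((2 * v z - suppFn K v + suppFn K (-v)) / (suppFn K v + suppFn K (-v)))) := by
    have hfun : (fun z : X => (Polynomial.Chebyshev.T ℝ n).eval
        ((2 * v z - suppFn K v + suppFn K (-v)) / (suppFn K v + suppFn K (-v))))
        = fun z => Q.eval (v z) := funext fun z => (hQeval (v z)).symm
    rw [hfun]
    exact RS3.isPolyDegLE_comp n Q hQdeg v
  have hPbound : ∀ z ∈ K, |(Polynomial.Chebyshev.T ℝ n).eval
      ((2 * v z - suppFn K v + suppFn K (-v)) / (suppFn K v + suppFn K (-v)))| ≤ 1 := by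
    intro z hz
    have h1 := hle_h v z hz
    have h2 := hle_h (-v) z hz
    rw [ContinuousLinearMap.neg_apply] at h2
    apply RS.chebT_abs_le
    · rw [le_div_iff₀ hwv]
      linarith
    · rw [div_le_one hwv]
      linarith
  have hPx : (Polynomial.Chebyshev.T ℝ n).eval
      ((2 * v x - suppFn K v + suppFn K (-v)) / (suppFn K v + suppFn K (-v)))
      = (Polynomial.Chebyshev.T ℝ n).eval α := by rw [hargx]
  refine ⟨?_, v, hv, hPpoly, hPbound, hPx⟩
  have hmemS : (Polynomial.Chebyshev.T ℝ n).eval α ∈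
      {y : ℝ | ∃ p : X → ℝ, IsPolyDegLE n p ∧ (∀ z ∈ K, |p z| ≤ 1) ∧ y = p x} :=
    ⟨_, hPpoly, hPbound, hPx.symm⟩
  have hbddS : ∀ y ∈ {y : ℝ | ∃ p : X → ℝ, IsPolyDegLE n p ∧ (∀ z ∈ K, |p z| ≤ 1) ∧ y = p x},
      y ≤ (Polynomial.Chebyshev.T ℝ n).eval α := by
    rintro y ⟨p, h1, h2, rfl⟩
    exact hub p h1 h2
  exact le_antisymm (csSup_le ⟨_, hmemS⟩ hbddS) (le_csSup ⟨_, hbddS⟩ hmemS)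

end Geo

/-- Révész–Sarantopoulos Chebyshev theorem: for a convex body `K` and `x ∉ K`,
`Cₙ(K,x) = sup { p(x) : deg p ≤ n, ‖p‖_K ≤ 1 } = Tₙ(α(K,x))`, and the supremum is
attained by `z ↦ Tₙ((2⟨v,z⟩ - h(K,v) + h(K,-v))/w(K,v))` for a suitable unit functional
`v`. -/
theorem chebyshev_convex_body {X : Type*} [NormedAddCommGroup X] [NormedSpace ℝ X]
    (K : Set X) (hconv : Convex ℝ K) (hcl : IsClosed K) (hbd : Bornology.IsBounded K)
    (hint : (interior K).Nonempty) (x : X) (hx : x ∉ K) (n : ℕ) (hn : 1 ≤ n) :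
    sSup {y : ℝ | ∃ p : X → ℝ, IsPolyDegLE n p ∧ (∀ z ∈ K, |p z| ≤ 1) ∧ y = p x} =
        (Polynomial.Chebyshev.T ℝ n).eval (genMinkowski K x) ∧
      ∃ v : X →L[ℝ] ℝ, ‖v‖ = 1 ∧
        IsPolyDegLE n (fun z => (Polynomial.Chebyshev.T ℝ n).eval
          ((2 * v z - suppFn K v + suppFn K (-v)) / (suppFn K v + suppFn K (-v)))) ∧
        (∀ z ∈ K, |(Polynomial.Chebyshev.T ℝ n).eval
          ((2 * v z - suppFn K v + suppFn K (-v)) / (suppFn K v + suppFn K (-v)))| ≤ 1) ∧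
        (Polynomial.Chebyshev.T ℝ n).eval
            ((2 * v x - suppFn K v + suppFn K (-v)) / (suppFn K v + suppFn K (-v))) =
          (Polynomial.Chebyshev.T ℝ n).eval (genMinkowski K x) :=
  chebyshev_convex_body' K hconv hcl hbd hint x hx n hn
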